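/- Let N = n+1 be odd with n ≥ 2. Then the adjacency polytope is covered by the simplices of Δ_N: conv(S) = ⋃_{λ ∈ Λ_N} conv({v_i(λ) : 1 ≤ i ≤ N}). That is, every point of the convex hull of S lies in G^0_λ for some λ ∈ Λ_N. -/

import Mathlib

open Finset

/-- `eVec n k` is the standard basis vector `e_k` of `ℝ^n` for `1 ≤ k ≤ n`,
with the convention `e_0 = e_{n+1} = 0`. -/
noncomputable def eVec (n : ℕ) (k : ℕ) : Fin n → ℝ := fun t => if (t : ℕ) + 1 = k then 1 else 0

/-- `dVec n i = e_{i-1} - e_i`. -/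
noncomputable def dVec (n : ℕ) (i : ℕ) : Fin n → ℝ := eVec n (i - 1) - eVec n i

/-- `vPt n l i = λ_i (e_{i-1} - e_i)`. -/
noncomputable def vPt (n : ℕ) (l : ℕ → ℝ) (i : ℕ) : Fin n → ℝ := l i • dVec n i

/-- The point configuration `S = {0} ∪ {±(e_{i-1} - e_i) : 1 ≤ i ≤ N}`. -/
noncomputable def Sconf (n N : ℕ) : Set (Fin n → ℝ) :=
  insert 0 {x | ∃ i ∈ Finset.Icc 1 N, x = dVec n i ∨ x = -dVec n i}

/-- The index set `Λ_N` for odd `N`, as functions `ℕ → ℝ` supported on `{1, …, N}`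
with exactly one zero coordinate, remaining coordinates `±1`, and coordinate sum `0`. -/
def LambdaOdd (N : ℕ) : Set (ℕ → ℝ) :=
  {l | ∃ j ∈ Finset.Icc 1 N, l j = 0 ∧
        (∀ i ∈ Finset.Icc 1 N, i ≠ j → l i = 1 ∨ l i = -1) ∧
        (∑ i ∈ Finset.Icc 1 N, l i) = 0}

lemma eVec_zero (n : ℕ) : eVec n 0 = 0 := by
  funext t; simp [eVec]

lemma eVec_top (n : ℕ) : eVec n (n + 1) = 0 := by
  funext t; have := t.isLt; simp only [eVec, Pi.zero_apply, ite_eq_right_iff, one_ne_zero]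
  omega

lemma sum_dVec (n N : ℕ) (hN : N = n + 1) : ∑ i ∈ Icc 1 N, dVec n i = 0 := by
  have h1 : Icc 1 N = Ico 1 (N + 1) := by exact (Finset.Ico_add_one_right_eq_Icc 1 N).symm
  rw [h1, Finset.sum_Ico_eq_sum_range]
  have h2 : ∀ i, dVec n (1 + i) = eVec n i - eVec n (i + 1) := by
    intro i
    have : 1 + i - 1 = i := by omega
    rw [dVec, this, add_comm 1 i]
  simp only [h2]
  rw [Finset.sum_range_sub' (f := eVec n)]
  have : N + 1 - 1 = N := by omega
  rw [this, eVec_zero, hN, eVec_top, sub_zero]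

lemma median_exists (s : Finset ℕ) (c : ℕ → ℝ) (k : ℕ) (hcard : s.card = 2 * k + 1) :
    ∃ j ∈ s, (s.filter (fun i => c i < c j)).card ≤ k ∧
             (s.filter (fun i => c j < c i)).card ≤ k := by
  classical
  set T := s.filter (fun j => k + 1 ≤ (s.filter (fun i => c i ≤ c j)).card) with hT
  have hsne : s.Nonempty := by rw [← Finset.card_pos, hcard]; omega
  obtain ⟨j₀, hj₀s, hj₀⟩ := s.exists_max_image c hsne
  have hTne : T.Nonempty := by
    refine ⟨j₀, Finset.mem_filter.2 ⟨hj₀s, ?_⟩⟩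
    have h : s.filter (fun i => c i ≤ c j₀) = s :=
      Finset.filter_true_of_mem (fun i hi => hj₀ i hi)
    rw [h, hcard]; omega
  obtain ⟨j, hjT, hjmin⟩ := T.exists_min_image c hTne
  have hjs : j ∈ s := (Finset.mem_filter.1 hjT).1
  have hjle : k + 1 ≤ (s.filter (fun i => c i ≤ c j)).card := (Finset.mem_filter.1 hjT).2
  refine ⟨j, hjs, ?_, ?_⟩
  · by_contra h
    push_neg at h
    have hFne : (s.filter (fun i => c i < c j)).Nonempty := by
      rw [← Finset.card_pos]; omega
    obtain ⟨j', hj'F, hj'⟩ := (s.filter (fun i => c i < c j)).exists_max_image c hFne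
    have hj's : j' ∈ s := (Finset.mem_filter.1 hj'F).1
    have hj'lt : c j' < c j := (Finset.mem_filter.1 hj'F).2
    have hsub : s.filter (fun i => c i < c j) ⊆ s.filter (fun i => c i ≤ c j') := by
      intro i hi
      exact Finset.mem_filter.2 ⟨(Finset.mem_filter.1 hi).1, hj' i hi⟩
    have hj'T : j' ∈ T :=
      Finset.mem_filter.2 ⟨hj's, le_trans (by omega) (Finset.card_le_card hsub)⟩
    exact absurd (hjmin j' hj'T) (not_le.2 hj'lt)
  · have htot := Finset.card_filter_add_card_filter_not (s := s) (p := fun i => c i ≤ c j)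
    have heq : (s.filter fun i => ¬ c i ≤ c j) = s.filter (fun i => c j < c i) :=
      Finset.filter_congr (fun i _ => by rw [not_le])
    rw [heq] at htot
    omega

lemma median_min_aux (s : Finset ℕ) (c : ℕ → ℝ) (k : ℕ) (hcard : s.card = 2 * k + 1)
    (m : ℝ) (hm : 0 ≤ m)
    (h1 : (s.filter (fun i => c i < m)).card ≤ k) :
    ∑ i ∈ s, |c i - m| ≤ ∑ i ∈ s, |c i| := by
  classical
  have key : ∀ i ∈ s, |c i - m| ≤ |c i| + (if m ≤ c i then -m else m) := by
    intro i _
    by_cases h : m ≤ c i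
    · rw [if_pos h, abs_of_nonneg (by linarith : (0:ℝ) ≤ c i - m),
        abs_of_nonneg (by linarith : (0:ℝ) ≤ c i)]
      linarith
    · rw [if_neg h]
      have h2 : |c i - m| ≤ |c i| + |m| := by
        have := abs_add_le (c i) (-m)
        simpa [sub_eq_add_neg, abs_neg] using this
      rw [abs_of_nonneg hm] at h2
      exact h2
  have hsum := Finset.sum_le_sum key
  rw [Finset.sum_add_distrib] at hsum
  have htot := Finset.card_filter_add_card_filter_not (s := s) (p := fun i => m ≤ c i)
  have heq : (s.filter fun i => ¬ m ≤ c i) = s.filter (fun i => c i < m) :=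
    Finset.filter_congr (fun i _ => by rw [not_le])
  rw [heq] at htot
  have hA : k + 1 ≤ (s.filter (fun i => m ≤ c i)).card := by omega
  have hite : ∑ i ∈ s, (if m ≤ c i then -m else m) ≤ 0 := by
    rw [Finset.sum_ite, Finset.sum_const, Finset.sum_const, heq, nsmul_eq_mul, nsmul_eq_mul]
    have hc1 : (k + 1 : ℝ) ≤ ((s.filter (fun i => m ≤ c i)).card : ℝ) := by exact_mod_cast hA
    have hc2 : ((s.filter (fun i => c i < m)).card : ℝ) ≤ k := by exact_mod_cast h1
    nlinarith
  linarith

lemma median_min (s : Finset ℕ) (c : ℕ → ℝ) (k : ℕ) (hcard : s.card = 2 * k + 1)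
    (j : ℕ)
    (h1 : (s.filter (fun i => c i < c j)).card ≤ k)
    (h2 : (s.filter (fun i => c j < c i)).card ≤ k) :
    ∑ i ∈ s, |c i - c j| ≤ ∑ i ∈ s, |c i| := by
  rcases le_total 0 (c j) with hm | hm
  · exact median_min_aux s c k hcard (c j) hm h1
  · have := median_min_aux s (fun i => -c i) k hcard (-(c j)) (by linarith)
      (by
        have heq : (s.filter fun i => -c i < -(c j)) = s.filter (fun i => c j < c i) :=
          Finset.filter_congr (fun i _ => by constructor <;> intro <;> linarith)
        rw [heq]; exact h2)
    calc ∑ i ∈ s, |c i - c j| = ∑ i ∈ s, |(-c i) - (-(c j))| := by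
          apply Finset.sum_congr rfl; intro i _
          rw [show (-c i) - (-(c j)) = -(c i - c j) by ring, abs_neg]
      _ ≤ ∑ i ∈ s, |(-c i)| := this
      _ = ∑ i ∈ s, |c i| := by simp [abs_neg]

def Bset (n N : ℕ) : Set (Fin n → ℝ) :=
  {x | ∃ c : ℕ → ℝ, (∑ i ∈ Icc 1 N, |c i|) ≤ 1 ∧ x = ∑ i ∈ Icc 1 N, c i • dVec n i}

lemma convex_Bset (n N : ℕ) : Convex ℝ (Bset n N) := by
  intro x hx y hy a b ha hb hab
  obtain ⟨cx, hcx1, hcx2⟩ := hx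
  obtain ⟨cy, hcy1, hcy2⟩ := hy
  refine ⟨fun i => a * cx i + b * cy i, ?_, ?_⟩
  · calc ∑ i ∈ Icc 1 N, |a * cx i + b * cy i|
        ≤ ∑ i ∈ Icc 1 N, (a * |cx i| + b * |cy i|) := by
          apply Finset.sum_le_sum
          intro i _
          calc |a * cx i + b * cy i| ≤ |a * cx i| + |b * cy i| := abs_add_le _ _
            _ = a * |cx i| + b * |cy i| := by
                rw [abs_mul, abs_mul, abs_of_nonneg ha, abs_of_nonneg hb]
      _ = a * (∑ i ∈ Icc 1 N, |cx i|) + b * (∑ i ∈ Icc 1 N, |cy i|) := by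
          rw [Finset.sum_add_distrib, Finset.mul_sum, Finset.mul_sum]
      _ ≤ a * 1 + b * 1 := by gcongr
      _ = 1 := by linarith
  · rw [hcx2, hcy2, Finset.smul_sum, Finset.smul_sum, ← Finset.sum_add_distrib]
    apply Finset.sum_congr rfl
    intro i _
    rw [smul_smul, smul_smul, ← add_smul]

lemma Sconf_subset_Bset (n N : ℕ) : Sconf n N ⊆ Bset n N := by
  intro x hx
  rcases hx with h0 | ⟨i₀, hi₀, h⟩
  · exact ⟨0, by simp, by simp [h0]⟩
  · rcases h with h | h
    · refine ⟨fun i => if i = i₀ then 1 else 0, ?_, ?_⟩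
      · rw [Finset.sum_congr rfl (fun i _ => by rw [apply_ite abs, abs_one, abs_zero]),
          Finset.sum_ite_eq' (Icc 1 N) i₀ (fun _ => (1:ℝ)), if_pos hi₀]
      · rw [h, Finset.sum_eq_single i₀]
        · simp
        · intro i _ hne; simp [hne]
        · intro habs; exact absurd hi₀ habs
    · refine ⟨fun i => if i = i₀ then -1 else 0, ?_, ?_⟩
      · rw [Finset.sum_congr rfl (fun i _ => by rw [apply_ite abs, abs_neg, abs_one, abs_zero]),
          Finset.sum_ite_eq' (Icc 1 N) i₀ (fun _ => (1:ℝ)), if_pos hi₀]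
      · rw [h, Finset.sum_eq_single i₀]
        · simp
        · intro i _ hne; simp [hne]
        · intro habs; exact absurd hi₀ habs

theorem stmt11 (n N : ℕ) (hn : 2 ≤ n) (hN : N = n + 1) (hNo : Odd N) :
    convexHull ℝ (Sconf n N) =
      ⋃ l ∈ LambdaOdd N,
        convexHull ℝ {x | ∃ i ∈ Finset.Icc 1 N, x = vPt n l i} := by
  classical
  obtain ⟨k, hk⟩ := hNo
  apply Set.Subset.antisymm
  · intro x hx
    have hxB : x ∈ Bset n N := convexHull_min (Sconf_subset_Bset n N) (convex_Bset n N) hx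
    obtain ⟨c, hc1, hc2⟩ := hxB
    have hcard : (Icc 1 N).card = 2 * k + 1 := by rw [Nat.card_Icc]; omega
    obtain ⟨j, hjI, hlt, hgt⟩ := median_exists (Icc 1 N) c k hcard
    set m := c j with hm
    have hmed : ∑ i ∈ Icc 1 N, |c i - m| ≤ ∑ i ∈ Icc 1 N, |c i| :=
      median_min (Icc 1 N) c k hcard j hlt hgt
    set E := (Icc 1 N).erase j with hE
    have hEcard : E.card = 2 * k := by
      rw [hE, Finset.card_erase_of_mem hjI, hcard]
      omega
    set P := E.filter (fun i => m < c i) with hP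
    set Q := E.filter (fun i => c i < m) with hQ
    set Z := E.filter (fun i => c i = m) with hZ
    have hPk : P.card ≤ k := le_trans (Finset.card_le_card (by
      intro i hi
      rw [hP, Finset.mem_filter] at hi
      exact Finset.mem_filter.2 ⟨Finset.mem_of_mem_erase hi.1, hi.2⟩)) hgt
    have hQk : Q.card ≤ k := le_trans (Finset.card_le_card (by
      intro i hi
      rw [hQ, Finset.mem_filter] at hi
      exact Finset.mem_filter.2 ⟨Finset.mem_of_mem_erase hi.1, hi.2⟩)) hlt
    have hPQZ : Z.card + (Q.card + P.card) = 2 * k := by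
      have h1 := Finset.card_filter_add_card_filter_not (s := E) (p := fun i => c i = m)
      have h2 : (E.filter fun i => ¬ c i = m) = Q ∪ P := by
        rw [hQ, hP, ← Finset.filter_or]
        exact Finset.filter_congr (fun i _ => by
          constructor
          · intro h; rcases lt_trichotomy (c i) m with h' | h' | h'
            · exact Or.inl h'
            · exact absurd h' h
            · exact Or.inr h'
          · intro h h'; rcases h with h | h <;> linarith)
      have h3 : (Q ∪ P).card = Q.card + P.card := by
        apply Finset.card_union_of_disjoint
        rw [Finset.disjoint_left]
        intro i hiQ hiP
        have := (Finset.mem_filter.1 hiQ).2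
        have := (Finset.mem_filter.1 hiP).2
        linarith
      rw [h2, ← hZ] at h1
      omega
    obtain ⟨Z₁, hZ₁Z, hZ₁card⟩ := Finset.exists_subset_card_eq (show k - P.card ≤ Z.card by omega)
    set U := P ∪ Z₁ with hU
    have hUE : U ⊆ E :=
      Finset.union_subset (Finset.filter_subset _ _)
        (hZ₁Z.trans (Finset.filter_subset _ _))
    have hPZdisj : Disjoint P Z₁ := by
      rw [Finset.disjoint_left]
      intro i hiP hiZ₁
      have h1 := (Finset.mem_filter.1 hiP).2
      have h2 := (Finset.mem_filter.1 (hZ₁Z hiZ₁)).2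
      linarith [h2 ▸ h1]
    have hUcard : U.card = k := by
      rw [hU, Finset.card_union_of_disjoint hPZdisj, hZ₁card]; omega
    set l : ℕ → ℝ := fun i => if i = j then 0 else if i ∈ U then 1 else -1 with hl
    have hlj : l j = 0 := by simp [hl]
    have hlLambda : l ∈ LambdaOdd N := by
      refine ⟨j, hjI, hlj, fun i _ hne => ?_, ?_⟩
      · simp only [hl, if_neg hne]
        split
        · exact Or.inl rfl
        · exact Or.inr rfl
      · rw [← Finset.add_sum_erase _ l hjI, hlj, zero_add]
        have h1 : ∑ i ∈ E, l i = ∑ i ∈ E, (if i ∈ U then (1:ℝ) else -1) := by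
          apply Finset.sum_congr rfl
          intro i hi
          rw [hl]
          simp only [if_neg (Finset.ne_of_mem_erase hi)]
        rw [← hE, h1, Finset.sum_ite, Finset.sum_const, Finset.sum_const]
        have h2 : E.filter (fun i => i ∈ U) = U := by
          rw [Finset.filter_mem_eq_inter, Finset.inter_eq_right.2 hUE]
        have h3 := Finset.card_filter_add_card_filter_not (s := E) (p := fun i => i ∈ U)
        rw [h2] at h3 ⊢
        have h4 : (E.filter fun i => i ∉ U).card = k := by omega
        rw [h4, hUcard]
        simp
    set w : ℕ → ℝ := fun i => if i = j then 1 - ∑ i' ∈ Icc 1 N, |c i' - m| else |c i - m|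
      with hw
    have hS1 : ∑ i' ∈ Icc 1 N, |c i' - m| ≤ 1 := le_trans hmed hc1
    have hw0 : ∀ i ∈ Icc 1 N, 0 ≤ w i := by
      intro i _
      by_cases hij : i = j
      · rw [hw]; simp only [if_pos hij]; linarith
      · rw [hw]; simp only [if_neg hij]; exact abs_nonneg _
    have hwsum : ∑ i ∈ Icc 1 N, w i = 1 := by
      rw [← Finset.add_sum_erase _ w hjI]
      have h1 : ∑ i ∈ (Icc 1 N).erase j, w i = ∑ i ∈ (Icc 1 N).erase j, |c i - m| := by
        apply Finset.sum_congr rfl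
        intro i hi
        rw [hw]; simp only [if_neg (Finset.ne_of_mem_erase hi)]
      have h2 : ∑ i' ∈ Icc 1 N, |c i' - m| = ∑ i ∈ (Icc 1 N).erase j, |c i - m| := by
        rw [← Finset.add_sum_erase _ (fun i => |c i - m|) hjI, ← hm, sub_self, abs_zero, zero_add]
      have h3 : w j = 1 - ∑ i' ∈ Icc 1 N, |c i' - m| := by simp [hw]
      rw [h1, h3, h2]
      ring
    have hkey : ∀ i ∈ Icc 1 N, w i • vPt n l i = (c i - m) • dVec n i := by
      intro i hi
      by_cases hij : i = j
      · subst hij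
        rw [vPt, hlj, zero_smul, smul_zero, ← hm, sub_self, zero_smul]
      · have hwi : w i = |c i - m| := by rw [hw]; simp only [if_neg hij]
        rw [vPt, smul_smul, hwi]
        rcases lt_trichotomy (c i) m with h | h | h
        · have hiU : i ∉ U := by
            intro hiU
            rcases Finset.mem_union.1 hiU with hP' | hZ'
            · have := (Finset.mem_filter.1 hP').2; linarith
            · have := (Finset.mem_filter.1 (hZ₁Z hZ')).2; linarith [this]
          have hli : l i = -1 := by rw [hl]; simp only [if_neg hij, if_neg hiU]
          rw [hli, abs_of_neg (by linarith : c i - m < 0)]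
          congr 1
          ring
        · rw [h, sub_self, abs_zero, zero_mul, zero_smul]
        · have hiP : i ∈ P := Finset.mem_filter.2 ⟨Finset.mem_erase.2 ⟨hij, hi⟩, h⟩
          have hli : l i = 1 := by
            rw [hl]
            simp only [if_neg hij, if_pos (Finset.mem_union.2 (Or.inl hiP))]
            exact if_pos (Finset.mem_union.2 (Or.inl hiP))
          rw [hli, abs_of_pos (by linarith : 0 < c i - m), mul_one]
    have hxsum : ∑ i ∈ Icc 1 N, w i • vPt n l i = x := by
      rw [Finset.sum_congr rfl hkey]
      simp only [sub_smul]
      rw [Finset.sum_sub_distrib, ← Finset.smul_sum, sum_dVec n N hN, smul_zero, sub_zero, ← hc2]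
    refine Set.mem_iUnion₂.2 ⟨l, hlLambda, ?_⟩
    have hz : ∀ i ∈ Icc 1 N, vPt n l i ∈ {x : Fin n → ℝ | ∃ i' ∈ Icc 1 N, x = vPt n l i'} :=
      fun i hi => ⟨i, hi, rfl⟩
    have hmem := Finset.centerMass_mem_convexHull (Icc 1 N) hw0
      (by rw [hwsum]; norm_num) hz
    rw [Finset.centerMass, hwsum, inv_one, one_smul, hxsum] at hmem
    exact hmem
  · refine Set.iUnion₂_subset fun l hl => ?_
    obtain ⟨j, hjI, hlj, hpm, -⟩ := hl
    apply convexHull_mono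
    intro x hx
    obtain ⟨i, hi, rfl⟩ := hx
    by_cases hij : i = j
    · have h0 : vPt n l i = 0 := by rw [vPt, hij, hlj, zero_smul]
      rw [h0]
      exact Set.mem_insert _ _
    · rcases hpm i hi hij with h1 | h1
      · refine Set.mem_insert_iff.2 (Or.inr ⟨i, hi, Or.inl ?_⟩)
        rw [vPt, h1, one_smul]
      · refine Set.mem_insert_iff.2 (Or.inr ⟨i, hi, Or.inr ?_⟩)
        rw [vPt, h1, neg_one_smul]
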